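/- Let $q \in (1, \infty)$. For $x = (x_1, x_2) \in \mathbb{R}^2$ define $G(x) = \int_{-1}^{1} \frac{dy_1}{[(x_1 - y_1)^2 + (1 - x_2)^2]^{1/2}}$. Then for each $0 < \delta < 1/2$, the function $x \mapsto \mathbf{1}_{H_\delta}(x) G(x)$ tends to $0$ in $L^q([-r, r]^2)$ as $\delta \to 0$, where $H_\delta = \{ x \in [-r, r]^2 : \mathrm{dist}(x_j, \{-1, 1\}) < \delta \text{ for some } j \in \{1, 2\} \}$ and $r > 1$ is fixed. In particular $G \in L^q([-r,r]^2)$, with at most a logarithmic singularity $G(x) \lesssim 1 + \log \frac{C}{|1 - x_2|}$. -/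

import Mathlib

open MeasureTheory Set Filter ENNReal

/-- `G(x) = ∫_{-1}^1 dy₁ / √((x₁-y₁)² + (1-x₂)²)`. -/
noncomputable def G12 (x : ℝ × ℝ) : ℝ :=
  ∫ y1 in (-1 : ℝ)..1, 1 / Real.sqrt ((x.1 - y1) ^ 2 + (1 - x.2) ^ 2)

/-- The square `[-r,r]²`. -/
def bigSquare (r : ℝ) : Set (ℝ × ℝ) := Set.Icc (-r) r ×ˢ Set.Icc (-r) r

/-- The extended halo: points of `[-r,r]²` some coordinate of which is within `δ`
of `{-1, 1}`. -/
def halo (r δ : ℝ) : Set (ℝ × ℝ) :=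
  {x ∈ bigSquare r |
    |x.1 - 1| < δ ∨ |x.1 + 1| < δ ∨ |x.2 - 1| < δ ∨ |x.2 + 1| < δ}

namespace Stmt12Aux

/-- Measurable closed form of `G12`. -/
noncomputable def g (x : ℝ × ℝ) : ℝ :=
  Real.arsinh ((x.1 + 1) / |1 - x.2|) - Real.arsinh ((x.1 - 1) / |1 - x.2|)

lemma g_nonneg (x : ℝ × ℝ) : 0 ≤ g x := by
  rcases eq_or_ne x.2 1 with h | h
  · simp [g, h]
  · have ha : 0 < |1 - x.2| := abs_pos.2 (sub_ne_zero.2 (Ne.symm h))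
    have : (x.1 - 1) / |1 - x.2| ≤ (x.1 + 1) / |1 - x.2| := by gcongr; linarith
    simpa [g, sub_nonneg] using Real.arsinh_le_arsinh.2 this

lemma measurable_g : Measurable g := by
  have h1 : Measurable fun x : ℝ × ℝ => (x.1 + 1) / |1 - x.2| := by fun_prop
  have h2 : Measurable fun x : ℝ × ℝ => (x.1 - 1) / |1 - x.2| := by fun_prop
  exact (Real.continuous_arsinh.measurable.comp h1).sub
    (Real.continuous_arsinh.measurable.comp h2)

lemma G12_eq {x : ℝ × ℝ} (h : x.2 ≠ 1) : G12 x = g x := by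
  have ha : 0 < |1 - x.2| := abs_pos.2 (sub_ne_zero.2 (Ne.symm h))
  set a := |1 - x.2| with ha_def
  have hsq : (1 - x.2) ^ 2 = a ^ 2 := (sq_abs _).symm
  have key : ∀ y : ℝ, HasDerivAt (fun y => -Real.arsinh ((x.1 - y) / a))
      (1 / Real.sqrt ((x.1 - y) ^ 2 + (1 - x.2) ^ 2)) y := by
    intro y
    have h1 : HasDerivAt (fun y : ℝ => (x.1 - y) / a) (-1 / a) y := by
      simpa using ((hasDerivAt_id y).const_sub x.1).div_const a
    have h2 := ((Real.hasDerivAt_arsinh ((x.1 - y) / a)).comp y h1).neg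
    refine h2.congr_deriv (Eq.symm ?_)
    have hpos : 0 < (x.1 - y) ^ 2 + a ^ 2 := by positivity
    have e0 : 1 + ((x.1 - y) / a) ^ 2 = ((x.1 - y) ^ 2 + a ^ 2) / a ^ 2 := by
      field_simp; ring
    have e1 : Real.sqrt (1 + ((x.1 - y) / a) ^ 2)
        = Real.sqrt ((x.1 - y) ^ 2 + a ^ 2) / a := by
      rw [e0, Real.sqrt_div hpos.le, Real.sqrt_sq ha.le]
    rw [e1, hsq]
    have hs : 0 < Real.sqrt ((x.1 - y) ^ 2 + a ^ 2) := Real.sqrt_pos.2 hpos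
    field_simp
  have hcont : Continuous fun y : ℝ => 1 / Real.sqrt ((x.1 - y) ^ 2 + (1 - x.2) ^ 2) := by
    apply continuous_const.div
    · exact Real.continuous_sqrt.comp (by fun_prop)
    · intro y
      refine (Real.sqrt_pos.2 ?_).ne'
      rw [hsq]; positivity
  rw [G12, intervalIntegral.integral_eq_sub_of_hasDerivAt (fun y _ => key y)
    (hcont.intervalIntegrable _ _)]
  simp only [g, ← ha_def]
  ring

lemma g_le {r : ℝ} (hr : 1 < r) {x : ℝ × ℝ} (hx : x ∈ bigSquare r) (h2 : x.2 ≠ 1) :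
    g x ≤ 2 * Real.log (4 * (r + 1) / |1 - x.2|) := by
  obtain ⟨hx1, hx2⟩ := hx
  rw [mem_Icc] at hx1 hx2
  have ha : 0 < |1 - x.2| := abs_pos.2 (sub_ne_zero.2 (Ne.symm h2))
  set a := |1 - x.2| with ha_def
  have haM : a ≤ r + 1 := by
    rw [ha_def, abs_le]; constructor <;> linarith [hx2.1, hx2.2]
  set t := (r + 1) / a with ht_def
  have ht1 : 1 ≤ t := (one_le_div ha).2 haM
  have h1 : Real.arsinh ((x.1 + 1) / a) ≤ Real.arsinh t := by
    rw [Real.arsinh_le_arsinh, ht_def, div_le_div_iff_of_pos_right ha]; linarith [hx1.2]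
  have h2' : -Real.arsinh ((x.1 - 1) / a) ≤ Real.arsinh t := by
    rw [← Real.arsinh_neg, Real.arsinh_le_arsinh, ← neg_div, neg_sub, ht_def,
      div_le_div_iff_of_pos_right ha]
    linarith [hx1.1]
  have harsinh : Real.arsinh t ≤ Real.log (4 * (r + 1) / a) := by
    have hdef : Real.arsinh t = Real.log (t + Real.sqrt (1 + t ^ 2)) := rfl
    rw [hdef]
    have hs : Real.sqrt (1 + t ^ 2) ≤ 1 + t := by
      rw [show (1 : ℝ) + t = Real.sqrt ((1 + t) ^ 2) from (Real.sqrt_sq (by linarith)).symm]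
      apply Real.sqrt_le_sqrt; nlinarith
    apply Real.log_le_log (by positivity)
    calc t + Real.sqrt (1 + t ^ 2) ≤ t + (1 + t) := by linarith
      _ ≤ 4 * t := by linarith
      _ = 4 * (r + 1) / a := by rw [ht_def]; ring
  simp only [g]
  linarith

lemma a_le {r : ℝ} (hr : 1 < r) {x : ℝ × ℝ} (hx : x ∈ bigSquare r) : |1 - x.2| ≤ r + 1 := by
  obtain ⟨_, hx2⟩ := hx
  rw [mem_Icc] at hx2
  rw [abs_le]; constructor <;> linarith [hx2.1, hx2.2]

lemma integrableOn_B {r : ℝ} (hr : 1 < r) :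
    IntegrableOn (fun y : ℝ => |1 - y| ^ (-(1 : ℝ) / 2)) (Set.Icc (-r) r) volume := by
  have hs : (-1 : ℝ) < -(1 : ℝ) / 2 := by norm_num
  have hsplit : Set.Icc (-r) 1 ∪ Set.Icc (1 : ℝ) r = Set.Icc (-r) r :=
    Set.Icc_union_Icc_eq_Icc (by linarith) (by linarith)
  rw [← hsplit]
  apply IntegrableOn.union
  · have h1 : IntervalIntegrable (fun y : ℝ => (1 - y) ^ (-(1 : ℝ) / 2)) volume (-r) 1 := by
      have := (intervalIntegral.intervalIntegrable_rpow' (a := 0) (b := r + 1) hs).comp_sub_left 1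
      simpa using this.symm
    have h2 := (intervalIntegrable_iff_integrableOn_Icc_of_le (by linarith : (-r : ℝ) ≤ 1)).1 h1
    apply h2.congr_fun ?_ measurableSet_Icc
    intro y hy
    simp only [abs_of_nonneg (by linarith [hy.2] : (0:ℝ) ≤ 1 - y)]
  · have h1 : IntervalIntegrable (fun y : ℝ => (y - 1) ^ (-(1 : ℝ) / 2)) volume 1 r := by
      have := (intervalIntegral.intervalIntegrable_rpow' (a := 0) (b := r - 1) hs).comp_sub_right 1
      simpa using this
    have h2 := (intervalIntegrable_iff_integrableOn_Icc_of_le (by linarith : (1:ℝ) ≤ r)).1 h1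
    apply h2.congr_fun ?_ measurableSet_Icc
    intro y hy
    simp only [abs_of_nonpos (by linarith [hy.1] : (1:ℝ) - y ≤ 0), neg_sub]

lemma lintegral_snd_lt_top {r : ℝ} (hr : 1 < r) {B : ℝ → ℝ} (hB : Measurable B)
    (hint : IntegrableOn B (Set.Icc (-r) r) volume)
    (hBnn : ∀ y, 0 ≤ B y) :
    (∫⁻ x in bigSquare r, ENNReal.ofReal (B x.2) ∂volume) < ∞ := by
  have hmeas : Measurable fun x : ℝ × ℝ => ENNReal.ofReal (B x.2) :=
    ENNReal.measurable_ofReal.comp (hB.comp measurable_snd)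
  rw [bigSquare, Measure.volume_eq_prod, ← Measure.prod_restrict]
  rw [MeasureTheory.lintegral_prod _ hmeas.aemeasurable]
  simp only
  have hc : (∫⁻ y, ENNReal.ofReal (B y) ∂(volume.restrict (Set.Icc (-r) r))) < ∞ := by
    have h := hint.2
    rw [HasFiniteIntegral] at h
    refine lt_of_eq_of_lt (lintegral_congr fun y => ?_) h
    rw [← ofReal_norm_eq_enorm, Real.norm_of_nonneg (hBnn y)]
  rw [lintegral_const, Measure.restrict_apply_univ]
  exact ENNReal.mul_lt_top hc
    (by simp [Real.volume_Icc] : volume (Set.Icc (-r) r) < ∞)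

lemma nullLine : (volume : Measure (ℝ × ℝ)) {x | x.2 = 1} = 0 := by
  have : {x : ℝ × ℝ | x.2 = 1} = (Set.univ ×ˢ ({1} : Set ℝ) : Set (ℝ × ℝ)) := by
    ext x
    simp only [mem_setOf_eq, Set.mem_prod, Set.mem_univ, Set.mem_singleton_iff, true_and]
  rw [this, Measure.volume_eq_prod, Measure.prod_prod]
  simp

lemma measurableSet_bigSquare (r : ℝ) : MeasurableSet (bigSquare r) :=
  measurableSet_Icc.prod measurableSet_Icc

lemma key_finite {q r : ℝ} (hq : 1 < q) (hr : 1 < r) :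
    (∫⁻ x in bigSquare r, ENNReal.ofReal (G12 x) ^ q ∂volume) < ∞ := by
  have hq0 : (0 : ℝ) ≤ q := by linarith
  have hqne : q ≠ 0 := by linarith
  set C := 4 * (r + 1) with hC
  have hCpos : 0 < C := by positivity
  set ε := (2 * q)⁻¹ with hε
  have hεpos : 0 < ε := by rw [hε]; positivity
  set K := 2 * C ^ ε / ε with hK
  have hKpos : 0 < K := by rw [hK]; positivity
  set B : ℝ → ℝ := fun y => K ^ q * |1 - y| ^ (-(1 : ℝ) / 2) with hB
  have hBnn : ∀ y, 0 ≤ B y := fun y => by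
    rw [hB]; positivity
  have hpt : ∀ x ∈ bigSquare r, x.2 ≠ 1 →
      ENNReal.ofReal (G12 x) ^ q ≤ ENNReal.ofReal (B x.2) := by
    intro x hx h2
    have ha : 0 < |1 - x.2| := abs_pos.2 (sub_ne_zero.2 (Ne.symm h2))
    have hGnn : 0 ≤ G12 x := (G12_eq h2) ▸ g_nonneg x
    have hstep1 : G12 x ≤ 2 * Real.log (C / |1 - x.2|) := by
      rw [G12_eq h2, hC]; exact g_le hr hx h2
    have hlog : Real.log (C / |1 - x.2|) ≤ (C / |1 - x.2|) ^ ε / ε :=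
      Real.log_le_rpow_div (by positivity) hεpos
    have hCa : (C / |1 - x.2|) ^ ε = C ^ ε * |1 - x.2| ^ (-ε) := by
      rw [Real.div_rpow hCpos.le (abs_nonneg _), Real.rpow_neg (abs_nonneg _), div_eq_mul_inv]
    have h3 : G12 x ≤ K * |1 - x.2| ^ (-ε) := by
      calc G12 x ≤ 2 * ((C / |1 - x.2|) ^ ε / ε) := by
            refine le_trans hstep1 ?_
            have := mul_le_mul_of_nonneg_left hlog (by norm_num : (0:ℝ) ≤ 2)
            linarith
        _ = K * |1 - x.2| ^ (-ε) := by rw [hCa, hK]; field_simp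
    have h4 : G12 x ^ q ≤ (K * |1 - x.2| ^ (-ε)) ^ q :=
      Real.rpow_le_rpow hGnn h3 hq0
    have h5 : (K * |1 - x.2| ^ (-ε)) ^ q = B x.2 := by
      rw [hB, Real.mul_rpow hKpos.le (Real.rpow_nonneg (abs_nonneg _) _),
        ← Real.rpow_mul (abs_nonneg _)]
      simp only
      have he : -ε * q = -1 / 2 := by
        rw [hε]
        field_simp
      rw [he]
    rw [ENNReal.ofReal_rpow_of_nonneg hGnn hq0]
    exact ENNReal.ofReal_le_ofReal (h5 ▸ h4)
  have hae : ∀ᵐ x ∂(volume.restrict (bigSquare r)),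
      ENNReal.ofReal (G12 x) ^ q ≤ ENNReal.ofReal (B x.2) := by
    have h1 : ∀ᵐ x : ℝ × ℝ ∂volume, x.2 ≠ 1 := by
      rw [ae_iff]
      simpa using nullLine
    filter_upwards [ae_restrict_mem (measurableSet_bigSquare r), ae_restrict_of_ae h1]
      with x hx h2
    exact hpt x hx h2
  calc (∫⁻ x in bigSquare r, ENNReal.ofReal (G12 x) ^ q ∂volume)
      ≤ ∫⁻ x in bigSquare r, ENNReal.ofReal (B x.2) ∂volume := lintegral_mono_ae hae
    _ < ∞ := lintegral_snd_lt_top hr (by rw [hB]; fun_prop) (by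
        rw [hB]
        exact (integrableOn_B hr).const_mul _) hBnn



lemma measurableSet_halo (r δ : ℝ) : MeasurableSet (halo r δ) := by
  have h1 : MeasurableSet {x : ℝ × ℝ | |x.1 - 1| < δ} :=
    measurableSet_lt (by fun_prop) measurable_const
  have h2 : MeasurableSet {x : ℝ × ℝ | |x.1 + 1| < δ} :=
    measurableSet_lt (by fun_prop) measurable_const
  have h3 : MeasurableSet {x : ℝ × ℝ | |x.2 - 1| < δ} :=
    measurableSet_lt (by fun_prop) measurable_const
  have h4 : MeasurableSet {x : ℝ × ℝ | |x.2 + 1| < δ} :=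
    measurableSet_lt (by fun_prop) measurable_const
  exact (measurableSet_bigSquare r).inter (h1.union (h2.union (h3.union h4)))

lemma halo_mono {r δ δ' : ℝ} (h : δ ≤ δ') : halo r δ ⊆ halo r δ' := by
  rintro x ⟨hx, hd⟩
  refine ⟨hx, ?_⟩
  rcases hd with h1 | h1 | h1 | h1
  · exact Or.inl (h1.trans_le h)
  · exact Or.inr (Or.inl (h1.trans_le h))
  · exact Or.inr (Or.inr (Or.inl (h1.trans_le h)))
  · exact Or.inr (Or.inr (Or.inr (h1.trans_le h)))

lemma iInter_halo_subset (r : ℝ) :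
    (⋂ δ > (0 : ℝ), halo r δ) ⊆
      {x : ℝ × ℝ | x.1 = 1} ∪ {x | x.1 = -1} ∪ {x | x.2 = 1} ∪ {x | x.2 = -1} := by
  intro x hx
  by_contra hL
  simp only [Set.mem_union, mem_setOf_eq, not_or] at hL
  obtain ⟨⟨⟨e1, e2⟩, e3⟩, e4⟩ := hL
  have p1 : 0 < |x.1 - 1| := abs_pos.2 (sub_ne_zero.2 e1)
  have p2 : 0 < |x.1 + 1| := abs_pos.2 (by intro h; apply e2; linarith)
  have p3 : 0 < |x.2 - 1| := abs_pos.2 (sub_ne_zero.2 e3)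
  have p4 : 0 < |x.2 + 1| := abs_pos.2 (by intro h; apply e4; linarith)
  set δ0 := min (min |x.1 - 1| |x.1 + 1|) (min |x.2 - 1| |x.2 + 1|) with hδ0
  have hδ0pos : 0 < δ0 := by positivity
  have hmem : x ∈ halo r δ0 := by
    simp only [Set.mem_iInter] at hx
    exact hx δ0 hδ0pos
  obtain ⟨-, hd⟩ := hmem
  rcases hd with h1 | h1 | h1 | h1 <;> simp only [hδ0, lt_min_iff] at h1 <;>
    simp only [lt_self_iff_false, and_false, false_and] at h1

lemma nullVert (c : ℝ) : (volume : Measure (ℝ × ℝ)) {x | x.1 = c} = 0 := by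
  have : {x : ℝ × ℝ | x.1 = c} = (({c} : Set ℝ) ×ˢ Set.univ : Set (ℝ × ℝ)) := by
    ext x
    simp only [mem_setOf_eq, Set.mem_prod, Set.mem_univ, Set.mem_singleton_iff, and_true]
  rw [this, Measure.volume_eq_prod, Measure.prod_prod]
  simp

lemma nullHoriz (c : ℝ) : (volume : Measure (ℝ × ℝ)) {x | x.2 = c} = 0 := by
  have : {x : ℝ × ℝ | x.2 = c} = ((Set.univ : Set ℝ) ×ˢ ({c} : Set ℝ) : Set (ℝ × ℝ)) := by
    ext x
    simp only [mem_setOf_eq, Set.mem_prod, Set.mem_univ, Set.mem_singleton_iff, true_and]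
  rw [this, Measure.volume_eq_prod, Measure.prod_prod]
  simp

end Stmt12Aux

open Stmt12Aux in
/-- The halo part of `G` tends to `0` in `L^q([-r,r]²)` as `δ → 0`; moreover
`G ∈ L^q([-r,r]²)`, with at most a logarithmic singularity. -/
theorem stmt12 (q r : ℝ) (hq : 1 < q) (hr : 1 < r) :
    Tendsto
      (fun δ : ℝ => ∫⁻ x in bigSquare r,
        (halo r δ).indicator (fun x => ENNReal.ofReal (G12 x)) x ^ q ∂volume)
      (nhdsWithin 0 (Set.Ioi 0)) (nhds 0) ∧
    (∫⁻ x in bigSquare r, ENNReal.ofReal (G12 x) ^ q ∂volume) < ∞ ∧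
    ∃ C : ℝ, 0 < C ∧ ∀ x ∈ bigSquare r, x.2 ≠ 1 →
      G12 x ≤ C * (1 + Real.log (C / |1 - x.2|)) := by
  have hq0 : (0 : ℝ) < q := by linarith
  set F : ℝ × ℝ → ℝ≥0∞ := fun x => ENNReal.ofReal (G12 x) ^ q with hF
  set ν : Measure (ℝ × ℝ) := (volume.restrict (bigSquare r)).withDensity F with hν
  have hfin : ν Set.univ < ∞ := by
    rw [hν, withDensity_apply _ MeasurableSet.univ, Measure.restrict_univ]
    exact key_finite hq hr
  have hIδ : ∀ δ : ℝ, (∫⁻ x in bigSquare r,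
      (halo r δ).indicator (fun x => ENNReal.ofReal (G12 x)) x ^ q ∂volume)
      = ν (halo r δ) := by
    intro δ
    have hpt : ∀ x, (halo r δ).indicator (fun x => ENNReal.ofReal (G12 x)) x ^ q
        = (halo r δ).indicator F x := by
      intro x
      by_cases hx : x ∈ halo r δ
      · simp [Set.indicator_of_mem hx, hF]
      · simp [Set.indicator_of_notMem hx, ENNReal.zero_rpow_of_pos hq0]
    rw [lintegral_congr hpt, lintegral_indicator (measurableSet_halo r δ) F,
      hν, withDensity_apply _ (measurableSet_halo r δ)]
  have habs : ν ≪ (volume : Measure (ℝ × ℝ)) :=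
    (withDensity_absolutelyContinuous _ _).trans Measure.restrict_le_self.absolutelyContinuous
  refine ⟨?_, key_finite hq hr, ?_⟩
  · have htend := tendsto_measure_biInter_gt (μ := ν) (s := halo r) (a := 0)
      (fun δ _ => (measurableSet_halo r δ).nullMeasurableSet)
      (fun i j _ hij => halo_mono hij)
      ⟨1, by norm_num, ((measure_mono (Set.subset_univ _)).trans_lt hfin).ne⟩
    have hzero : ν (⋂ δ > (0 : ℝ), halo r δ) = 0 := by
      apply measure_mono_null (iInter_halo_subset r)
      refine measure_union_null (measure_union_null (measure_union_null ?_ ?_) ?_) ?_ <;>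
        apply habs
      · exact nullVert 1
      · exact nullVert (-1)
      · exact nullHoriz 1
      · exact nullHoriz (-1)
    rw [hzero] at htend
    have heq : (fun δ : ℝ => ∫⁻ x in bigSquare r,
        (halo r δ).indicator (fun x => ENNReal.ofReal (G12 x)) x ^ q ∂volume)
        = ν ∘ halo r := funext hIδ
    rw [heq]
    exact htend
  · refine ⟨4 * (r + 1), by linarith, ?_⟩
    intro x hx h2
    have ha : 0 < |1 - x.2| := abs_pos.2 (sub_ne_zero.2 (Ne.symm h2))
    have hG : G12 x ≤ 2 * Real.log (4 * (r + 1) / |1 - x.2|) := by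
      rw [G12_eq h2]; exact g_le hr hx h2
    have hL : 0 ≤ Real.log (4 * (r + 1) / |1 - x.2|) := by
      apply Real.log_nonneg
      rw [one_le_div ha]
      linarith [a_le hr hx]
    nlinarith [hG, hL]
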